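/- For every g > 0, the quartic-oscillator partition function admits the explicit Laplace representation ∫_{ℝ} exp(−(x² + x⁴)/g) dx = ∫_0^∞ exp(−t/g) · √2 / ( √(√(1 + 4t) − 1) · √(1 + 4t) ) dt; that is, the Borel-plane density of Z at level t equals √2 / (√(√(1+4t) − 1)·√(1+4t)), which is singular exactly at t = 0, the unique critical value of V(x) = x² + x⁴. -/

import Mathlib

open MeasureTheory Set Real

lemma quartic_image : (fun x : ℝ => x ^ 2 + x ^ 4) '' Ioi 0 = Ioi 0 := by
  ext t
  constructor
  · rintro ⟨x, hx, rfl⟩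
    have : (0:ℝ) < x := hx
    exact mem_Ioi.2 (by positivity)
  · intro ht
    have ht' : (0:ℝ) < t := ht
    have h1 : (1:ℝ) < Real.sqrt (1 + 4 * t) := by
      rw [show (1:ℝ) + 4 * t = (1 + 4 * t) from rfl]
      have := Real.lt_sqrt (x := 1) (y := 1 + 4 * t) (by norm_num)
      exact this.2 (by nlinarith)
    set u := Real.sqrt (1 + 4 * t) with hu
    have hu2 : u ^ 2 = 1 + 4 * t := Real.sq_sqrt (by linarith)
    refine ⟨Real.sqrt ((u - 1) / 2), ?_, ?_⟩
    · exact mem_Ioi.2 (Real.sqrt_pos.2 (by linarith))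
    · show Real.sqrt ((u - 1) / 2) ^ 2 + Real.sqrt ((u - 1) / 2) ^ 4 = t
      have hx2 : Real.sqrt ((u - 1) / 2) ^ 2 = (u - 1) / 2 :=
        Real.sq_sqrt (by linarith)
      have hx4 : Real.sqrt ((u - 1) / 2) ^ 4 = ((u - 1) / 2) ^ 2 := by
        rw [show (4:ℕ) = 2 * 2 by norm_num, pow_mul, hx2]
      rw [hx2, hx4]; nlinarith

theorem quartic_partition_laplace_representation (g : ℝ) (hg : 0 < g) :
    ∫ x : ℝ, Real.exp (-(x ^ 2 + x ^ 4) / g)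
      = ∫ t in Ioi (0 : ℝ),
          Real.exp (-t / g) *
            (Real.sqrt 2 /
              (Real.sqrt (Real.sqrt (1 + 4 * t) - 1) * Real.sqrt (1 + 4 * t))) := by
  -- split the real line using evenness
  have hsplit : ∫ x : ℝ, Real.exp (-(x ^ 2 + x ^ 4) / g)
      = 2 * ∫ x in Ioi (0:ℝ), Real.exp (-(x ^ 2 + x ^ 4) / g) := by
    rw [← integral_comp_abs (f := fun x => Real.exp (-(x ^ 2 + x ^ 4) / g))]
    congr 1; ext x
    rw [show (4:ℕ) = 2 * 2 by norm_num, pow_mul, pow_mul, sq_abs]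
  rw [hsplit]
  -- change of variables
  have hcov := MeasureTheory.integral_image_eq_integral_abs_deriv_smul
    (measurableSet_Ioi (a := (0:ℝ)))
    (f := fun x : ℝ => x ^ 2 + x ^ 4) (f' := fun x : ℝ => 2 * x + 4 * x ^ 3)
    (fun x _ => by
      have h1 : HasDerivAt (fun x : ℝ => x ^ 2 + x ^ 4) (2 * x + 4 * x ^ 3) x := by
        have h2 := (hasDerivAt_pow 2 x).add (hasDerivAt_pow 4 x)
        refine h2.congr_deriv ?_; push_cast; ring
      exact h1.hasDerivWithinAt)
    (fun x hx y hy hxy => by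
      simp only [mem_Ioi] at hx hy
      simp only [] at hxy
      by_contra hne
      rcases lt_or_gt_of_ne hne with h | h
      · have h2 : x ^ 2 < y ^ 2 := by nlinarith
        have h4 : x ^ 4 < y ^ 4 := by nlinarith
        linarith
      · have h2 : y ^ 2 < x ^ 2 := by nlinarith
        have h4 : y ^ 4 < x ^ 4 := by nlinarith
        linarith)
    (fun t => Real.exp (-t / g) *
      (Real.sqrt 2 /
        (Real.sqrt (Real.sqrt (1 + 4 * t) - 1) * Real.sqrt (1 + 4 * t))))
  rw [quartic_image] at hcov
  rw [hcov, ← MeasureTheory.integral_const_mul]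
  apply MeasureTheory.setIntegral_congr_fun measurableSet_Ioi
  intro x hx
  have hx0 : (0:ℝ) < x := hx
  have hs1 : Real.sqrt (1 + 4 * (x ^ 2 + x ^ 4)) = 1 + 2 * x ^ 2 := by
    rw [show 1 + 4 * (x ^ 2 + x ^ 4) = (1 + 2 * x ^ 2) ^ 2 by ring,
      Real.sqrt_sq (by positivity)]
  have hs2 : Real.sqrt (1 + 2 * x ^ 2 - 1) = Real.sqrt 2 * x := by
    rw [show 1 + 2 * x ^ 2 - 1 = 2 * x ^ 2 by ring, Real.sqrt_mul (by norm_num),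
      Real.sqrt_sq hx0.le]
  have habs : |2 * x + 4 * x ^ 3| = 2 * x + 4 * x ^ 3 := abs_of_pos (by positivity)
  simp only [smul_eq_mul, hs1, hs2, habs]
  have h2 : Real.sqrt 2 ≠ 0 := by positivity
  have h3 : (1 : ℝ) + 2 * x ^ 2 ≠ 0 := by positivity
  field_simp
  ring
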